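/- arXiv:1702.01887 — 2 statements merged into one kernel-verified Lean document; each statement's English description precedes it below -/
import Mathlib

section
/- If a family (fᵢ)_{i∈I} in a Hilbert space H is obtained from a frame (gᵢ)_{i∈I∪J} (J finite, disjoint from I) by removing the finitely many elements indexed by J, then (fᵢ) is either a frame for H or it is incomplete. -/
open Filter Topology

section aux

variable {H : Type*} [NormedAddCommGroup H] [InnerProductSpace ℂ H] [CompleteSpace H]

/-- Splitting a `HasSum` over a sum type. -/
lemma hasSum_sum_type' {α β : Type*} {f : α ⊕ β → ℝ} {a b : ℝ}
    (ha : HasSum (fun i => f (Sum.inl i)) a) (hb : HasSum (fun j => f (Sum.inr j)) b) :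
    HasSum f (a + b) := by
  have e1 : HasSum (f ∘ ((↑) : Set.range (Sum.inl : α → α ⊕ β) → α ⊕ β)) a := by
    rw [← (Equiv.Set.rangeInl α β).symm.hasSum_iff]
    exact ha
  have e2 : HasSum (f ∘ ((↑) : Set.range (Sum.inr : β → α ⊕ β) → α ⊕ β)) b := by
    rw [← (Equiv.Set.rangeInr α β).symm.hasSum_iff]
    exact hb
  exact e1.add_isCompl Set.isCompl_range_inl_range_inr e2

/-- A weak cluster point of a bounded sequence in a Hilbert space, along an ultrafilter. -/
lemma exists_weak_limit (x : ℕ → H) (hx : ∀ n, ‖x n‖ ≤ 1) (U : Ultrafilter ℕ) :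
    ∃ z : H, ∀ y : H, Tendsto (fun n => (inner ℂ (x n) y : ℂ)) (U : Filter ℕ) (𝓝 (inner ℂ z y)) := by
  have hL : ∀ y : H, ∃ c : ℂ, Tendsto (fun n => (inner ℂ (x n) y : ℂ)) (U : Filter ℕ) (𝓝 c) := by
    intro y
    have hcpt : IsCompact (Metric.closedBall (0 : ℂ) ‖y‖) := isCompact_closedBall _ _
    have hmem : ∀ n, (inner ℂ (x n) y : ℂ) ∈ Metric.closedBall (0 : ℂ) ‖y‖ := by
      intro n
      rw [Metric.mem_closedBall, dist_zero_right]
      calc ‖(inner ℂ (x n) y : ℂ)‖ ≤ ‖x n‖ * ‖y‖ := norm_inner_le_norm _ _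
        _ ≤ 1 * ‖y‖ := by gcongr; exact hx n
        _ = ‖y‖ := one_mul _
    have hle : ↑(U.map fun n => (inner ℂ (x n) y : ℂ)) ≤ 𝓟 (Metric.closedBall (0 : ℂ) ‖y‖) := by
      rw [Ultrafilter.coe_map]
      exact Filter.le_principal_iff.mpr (Filter.mem_map.mpr (Filter.univ_mem' hmem))
    obtain ⟨c, _, hc⟩ := hcpt.ultrafilter_le_nhds _ hle
    exact ⟨c, hc⟩
  choose L hLt using hL
  have hadd : ∀ y z : H, L (y + z) = L y + L z := by
    intro y z
    have h1 : Tendsto (fun n => (inner ℂ (x n) (y + z) : ℂ)) (U : Filter ℕ) (𝓝 (L y + L z)) := by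
      have := (hLt y).add (hLt z)
      simpa only [← inner_add_right] using this
    exact tendsto_nhds_unique (hLt _) h1
  have hsmul : ∀ (c : ℂ) (y : H), L (c • y) = c * L y := by
    intro c y
    have h1 : Tendsto (fun n => (inner ℂ (x n) (c • y) : ℂ)) (U : Filter ℕ) (𝓝 (c * L y)) := by
      have := (hLt y).const_mul c
      simpa only [inner_smul_right] using this
    exact tendsto_nhds_unique (hLt _) h1
  let φ : H →ₗ[ℂ] ℂ :=
    { toFun := L, map_add' := hadd, map_smul' := by intro c y; simpa using hsmul c y }
  have hbound : ∀ y : H, ‖φ y‖ ≤ 1 * ‖y‖ := by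
    intro y
    have h1 : Tendsto (fun n => ‖(inner ℂ (x n) y : ℂ)‖) (U : Filter ℕ) (𝓝 ‖L y‖) :=
      (hLt y).norm
    refine le_of_tendsto h1 (Filter.Eventually.of_forall fun n => ?_)
    calc ‖(inner ℂ (x n) y : ℂ)‖ ≤ ‖x n‖ * ‖y‖ := norm_inner_le_norm _ _
      _ ≤ 1 * ‖y‖ := by gcongr; exact hx n
  let Φ : H →L[ℂ] ℂ := φ.mkContinuous 1 hbound
  obtain ⟨z, hz⟩ := (InnerProductSpace.toDual ℂ H).surjective Φ
  refine ⟨z, fun y => ?_⟩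
  have : (inner ℂ z y : ℂ) = L y := by
    have := congrArg (fun F => F y) hz
    simpa [InnerProductSpace.toDual_apply_apply, Φ, φ] using this
  rw [this]; exact hLt y

end aux

/-- A family is a frame if it satisfies the two frame inequalities. -/
def IsFrame {ι H : Type*} [NormedAddCommGroup H] [InnerProductSpace ℂ H]
    (f : ι → H) : Prop :=
  ∃ A B : ℝ, 0 < A ∧ A ≤ B ∧ ∀ x : H,
    A * ‖x‖ ^ 2 ≤ (∑' i, ‖(inner ℂ x (f i) : ℂ)‖ ^ 2) ∧
    (∑' i, ‖(inner ℂ x (f i) : ℂ)‖ ^ 2) ≤ B * ‖x‖ ^ 2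

/-- A family is complete if its closed linear span is the whole space. -/
def CompleteSys {ι H : Type*} [NormedAddCommGroup H] [InnerProductSpace ℂ H]
    (f : ι → H) : Prop :=
  (Submodule.span ℂ (Set.range f)).topologicalClosure = ⊤

/-- Removing finitely many elements (indexed by a finite `J` disjoint from `I`)
from a frame `(gᵢ)_{i ∈ I ∪ J}` leaves either a frame or an incomplete family. -/
theorem stmt13 {H I J : Type*} [NormedAddCommGroup H] [InnerProductSpace ℂ H]
    [CompleteSpace H] [Finite J]
    (g : I ⊕ J → H) (hg : IsFrame g) :
    IsFrame (g ∘ Sum.inl) ∨ ¬ CompleteSys (g ∘ Sum.inl) := by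
  obtain ⟨A, B, hA, hAB, hfr⟩ := hg
  by_cases hc : CompleteSys (g ∘ Sum.inl)
  swap
  · exact Or.inr hc
  left
  have := Fintype.ofFinite J
  -- summability of the full family of squared inner products
  have hsum : ∀ x : H, Summable (fun i : I ⊕ J => ‖(inner ℂ x (g i) : ℂ)‖ ^ 2) := by
    intro x
    rcases eq_or_ne x 0 with rfl | hx
    · simpa using summable_zero
    · by_contra hns
      have h0 : (∑' i : I ⊕ J, ‖(inner ℂ x (g i) : ℂ)‖ ^ 2) = 0 := tsum_eq_zero_of_not_summable hns
      have := (hfr x).1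
      rw [h0] at this
      have hxpos : 0 < ‖x‖ := norm_pos_iff.mpr hx
      nlinarith [pow_pos hxpos 2, mul_pos hA (pow_pos hxpos 2)]
  have hsumI : ∀ x : H, Summable (fun i : I => ‖(inner ℂ x (g (Sum.inl i)) : ℂ)‖ ^ 2) :=
    fun x => (hsum x).comp_injective Sum.inl_injective
  have hsumJ : ∀ x : H, Summable (fun j : J => ‖(inner ℂ x (g (Sum.inr j)) : ℂ)‖ ^ 2) :=
    fun x => (hsum x).comp_injective Sum.inr_injective
  have hsplit : ∀ x : H, (∑' i : I ⊕ J, ‖(inner ℂ x (g i) : ℂ)‖ ^ 2)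
      = (∑' i : I, ‖(inner ℂ x (g (Sum.inl i)) : ℂ)‖ ^ 2)
        + (∑' j : J, ‖(inner ℂ x (g (Sum.inr j)) : ℂ)‖ ^ 2) := by
    intro x
    exact (hasSum_sum_type' (f := fun i : I ⊕ J => ‖(inner ℂ x (g i) : ℂ)‖ ^ 2)
      (hsumI x).hasSum (hsumJ x).hasSum).tsum_eq
  -- upper bound
  have hupper : ∀ x : H, (∑' i : I, ‖(inner ℂ x ((g ∘ Sum.inl) i) : ℂ)‖ ^ 2) ≤ B * ‖x‖ ^ 2 := by
    intro x
    have h1 := (hfr x).2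
    rw [hsplit x] at h1
    have h2 : 0 ≤ (∑' j : J, ‖(inner ℂ x (g (Sum.inr j)) : ℂ)‖ ^ 2) :=
      tsum_nonneg fun j => sq_nonneg _
    simpa [Function.comp] using (by linarith : (∑' i : I, ‖(inner ℂ x (g (Sum.inl i)) : ℂ)‖ ^ 2) ≤ B * ‖x‖ ^ 2)
  -- lower bound
  have hlower : ∃ ε : ℝ, 0 < ε ∧ ∀ x : H,
      ε * ‖x‖ ^ 2 ≤ (∑' i : I, ‖(inner ℂ x ((g ∘ Sum.inl) i) : ℂ)‖ ^ 2) := by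
    by_contra hno
    push_neg at hno
    -- produce unit vectors with small partial frame sums
    have hseq : ∀ n : ℕ, ∃ x : H, ‖x‖ = 1 ∧
        (∑' i : I, ‖(inner ℂ x (g (Sum.inl i)) : ℂ)‖ ^ 2) < 1 / (n + 1) := by
      intro n
      obtain ⟨y, hy⟩ := hno (1 / (n + 1)) (by positivity)
      have hy0 : y ≠ 0 := by
        rintro rfl
        simp only [norm_zero] at hy
        have : 0 ≤ (∑' i : I, ‖(inner ℂ (0 : H) ((g ∘ Sum.inl) i) : ℂ)‖ ^ 2) :=
          tsum_nonneg fun i => sq_nonneg _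
        nlinarith
      refine ⟨((‖y‖ : ℂ))⁻¹ • y, ?_, ?_⟩
      · rw [norm_smul, norm_inv, Complex.norm_real, norm_norm,
          inv_mul_cancel₀ (norm_ne_zero_iff.mpr hy0)]
      · have hscale : ∀ i : I, ‖(inner ℂ (((‖y‖ : ℂ))⁻¹ • y) (g (Sum.inl i)) : ℂ)‖ ^ 2
            = ‖y‖⁻¹ ^ 2 * ‖(inner ℂ y (g (Sum.inl i)) : ℂ)‖ ^ 2 := by
          intro i
          rw [inner_smul_left, map_inv₀, Complex.conj_ofReal, norm_mul, norm_inv,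
            Complex.norm_real, norm_norm, mul_pow]
        rw [tsum_congr hscale, tsum_mul_left]
        have hnpos : (0 : ℝ) < ‖y‖ := norm_pos_iff.mpr hy0
        have := hy
        simp only [Function.comp] at this
        calc ‖y‖⁻¹ ^ 2 * (∑' i : I, ‖(inner ℂ y (g (Sum.inl i)) : ℂ)‖ ^ 2)
            < ‖y‖⁻¹ ^ 2 * (1 / ((n : ℝ) + 1) * ‖y‖ ^ 2) := by
              apply mul_lt_mul_of_pos_left this (by positivity)
          _ = 1 / ((n : ℝ) + 1) := by field_simp
    choose x hx1 hx2 using hseq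
    obtain ⟨U, hU⟩ := Filter.exists_ultrafilter_le (atTop : Filter ℕ)
    obtain ⟨z, hz⟩ := exists_weak_limit x (fun n => le_of_eq (hx1 n)) U
    -- z is orthogonal to every g (Sum.inl i)
    have hzI : ∀ i : I, (inner ℂ z (g (Sum.inl i)) : ℂ) = 0 := by
      intro i
      have hterm : ∀ n, ‖(inner ℂ (x n) (g (Sum.inl i)) : ℂ)‖ ^ 2 < 1 / (n + 1) := by
        intro n
        exact lt_of_le_of_lt
          (Summable.le_tsum (hsumI (x n)) i fun j _ => sq_nonneg _) (hx2 n)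
      have h0 : Tendsto (fun n => (inner ℂ (x n) (g (Sum.inl i)) : ℂ)) atTop (𝓝 0) := by
        rw [tendsto_zero_iff_norm_tendsto_zero]
        have hb : Tendsto (fun n : ℕ => (1 / (n + 1) : ℝ)) atTop (𝓝 0) :=
          tendsto_one_div_add_atTop_nhds_zero_nat
        have hsq : Tendsto (fun n => ‖(inner ℂ (x n) (g (Sum.inl i)) : ℂ)‖ ^ 2) atTop (𝓝 0) := by
          refine squeeze_zero (fun n => sq_nonneg _) (fun n => (hterm n).le) hb
        have := hsq.sqrt
        simpa [Real.sqrt_sq (norm_nonneg _)] using this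
      have h0' : Tendsto (fun n => (inner ℂ (x n) (g (Sum.inl i)) : ℂ)) (U : Filter ℕ) (𝓝 0) :=
        h0.mono_left hU
      exact tendsto_nhds_unique (hz _) h0'
    -- completeness forces z = 0
    have hz0 : z = 0 := by
      have horth : z ∈ (Submodule.span ℂ (Set.range (g ∘ Sum.inl)))ᗮ := by
        rw [Submodule.mem_orthogonal]
        intro u hu
        induction hu using Submodule.span_induction with
        | mem u hu =>
            obtain ⟨i, rfl⟩ := hu
            have := hzI i
            simpa [Function.comp] using (inner_eq_zero_symm.mp this)
        | zero => simp
        | add u v _ _ hu hv => rw [inner_add_left, hu, hv, add_zero]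
        | smul c u _ hu => rw [inner_smul_left, hu, mul_zero]
      rw [CompleteSys, Submodule.topologicalClosure_eq_top_iff] at hc
      rw [hc] at horth
      simpa using horth
    -- but the J-part of the frame sums stays bounded below
    have hJlow : ∀ᶠ n in atTop, A / 2 ≤ ∑ j : J, ‖(inner ℂ (x n) (g (Sum.inr j)) : ℂ)‖ ^ 2 := by
      have hb : Tendsto (fun n : ℕ => (1 / (n + 1) : ℝ)) atTop (𝓝 0) :=
        tendsto_one_div_add_atTop_nhds_zero_nat
      have hev : ∀ᶠ n : ℕ in atTop, (1 / ((n : ℝ) + 1)) < A / 2 :=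
        hb.eventually_lt_const (by linarith : (0:ℝ) < A / 2)
      filter_upwards [hev] with n hn
      have h1 := (hfr (x n)).1
      rw [hsplit (x n), hx1 n] at h1
      have h2 : (∑' j : J, ‖(inner ℂ (x n) (g (Sum.inr j)) : ℂ)‖ ^ 2)
          = ∑ j : J, ‖(inner ℂ (x n) (g (Sum.inr j)) : ℂ)‖ ^ 2 := tsum_fintype _
      have h3 := hx2 n
      rw [h2] at h1
      simp only [one_pow, mul_one] at h1
      linarith
    have hJ0 : Tendsto (fun n => ∑ j : J, ‖(inner ℂ (x n) (g (Sum.inr j)) : ℂ)‖ ^ 2)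
        (U : Filter ℕ) (𝓝 0) := by
      have : ∀ j : J, Tendsto (fun n => ‖(inner ℂ (x n) (g (Sum.inr j)) : ℂ)‖ ^ 2)
          (U : Filter ℕ) (𝓝 0) := by
        intro j
        have := hz (g (Sum.inr j))
        rw [hz0] at this
        simp only [inner_zero_left] at this
        have := (this.norm).pow 2
        simpa using this
      have hT := tendsto_finset_sum (Finset.univ : Finset J)
        (fun j _ => this j)
      simpa using hT
    have hge : A / 2 ≤ (0 : ℝ) :=
      ge_of_tendsto hJ0 (hJlow.filter_mono hU)
    linarith
  obtain ⟨ε, hε, hεle⟩ := hlower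
  refine ⟨min ε B, B, lt_min hε (lt_of_lt_of_le hA hAB), min_le_right _ _, fun x => ?_⟩
  constructor
  · have h1 := hεle x
    have h2 : min ε B * ‖x‖ ^ 2 ≤ ε * ‖x‖ ^ 2 :=
      mul_le_mul_of_nonneg_right (min_le_left _ _) (sq_nonneg _)
    linarith
  · exact hupper x
end

section
/- For every even function f ∈ L²[−1/2,1/2] (i.e. f(x) = f(−x) a.e.), one has Σ_{n≥0} |f̂(n)|² + Σ_{n≤−1} |(x f)^(n)|² ≥ (11/24)‖f‖², where f̂(n) and (xf)^(n) denote the n-th Fourier coefficients of f and of x ↦ x·f(x) respectively. -/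
open MeasureTheory Real

/-- The `n`-th Fourier coefficient `∫_{-1/2}^{1/2} f(x) e^{-2πinx} dx`. -/
noncomputable def fourierCoef (f : ℝ → ℂ) (n : ℤ) : ℂ :=
  ∫ x in (-(1/2) : ℝ)..(1/2), f x * Complex.exp (-(Complex.I * (2 * π * n * x : ℝ)))

open Set AddCircle
open scoped ENNReal

section aux
variable [hT : Fact ((0:ℝ) < 1)]

-- Parseval for our setting
lemma parseval_aux (f : ℝ → ℂ)
    (hf : MemLp f 2 (volume.restrict (Set.Ioc (-(1/2) : ℝ) (1/2)))) :
    HasSum (fun n : ℤ => ‖fourierCoef f n‖ ^ 2)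
      (∫ x in (-(1/2) : ℝ)..(1/2), ‖f x‖ ^ 2) := by
  have hI : (-(1/2):ℝ) + 1 = 1/2 := by norm_num
  set a : ℝ := -(1/2) with ha
  set g : AddCircle (1:ℝ) → ℂ := AddCircle.liftIoc 1 a f with hg
  have hvol : (volume : Measure (AddCircle (1:ℝ))) = haarAddCircle := by
    rw [AddCircle.volume_eq_smul_haarAddCircle]; simp
  -- the projection map is measure preserving
  have hmp := AddCircle.measurePreserving_mk (1:ℝ) a
  rw [hI] at hmp
  -- g ∘ mk = f a.e. on Ioc a (1/2)
  have hcomp : (fun x : ℝ => g (x : AddCircle (1:ℝ))) =ᵐ[volume.restrict (Set.Ioc a (1/2))] f := by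
    filter_upwards [ae_restrict_mem measurableSet_Ioc] with x hx
    have : x ∈ Set.Ioc a (a + 1) := by rwa [hI]
    exact AddCircle.liftIoc_coe_apply this
  -- g is a.e. strongly measurable
  have hφm : Measurable (fun z : AddCircle (1:ℝ) => ((measurableEquivIoc 1 a z : ℝ))) :=
    measurable_subtype_coe.comp (measurableEquivIoc 1 a).measurable
  have hgm : AEStronglyMeasurable g (volume : Measure (AddCircle (1:ℝ))) := by
    have hmap : Measure.map (fun z : AddCircle (1:ℝ) => ((measurableEquivIoc 1 a z : ℝ))) volume
        = volume.restrict (Set.Ioc a (1/2)) := by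
      rw [← hmp.map_eq, Measure.map_map hφm AddCircle.measurable_mk']
      rw [show ((fun z : AddCircle (1:ℝ) => ((measurableEquivIoc 1 a z : ℝ)))
          ∘ (fun x : ℝ => (x : AddCircle (1:ℝ)))) = fun x : ℝ =>
          ((measurableEquivIoc 1 a (x : AddCircle (1:ℝ)) : ℝ)) from rfl]
      rw [Measure.map_congr (g := id), Measure.map_id]
      filter_upwards [ae_restrict_mem measurableSet_Ioc] with x hx
      have hx' : x ∈ Set.Ioc a (a+1) := by rwa [hI]
      have : (equivIoc 1 a) (x : AddCircle (1:ℝ)) = ⟨x, hx'⟩ := by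
        rw [Equiv.apply_eq_iff_eq_symm_apply]; rfl
      simp only [measurableEquivIoc, MeasurableEquiv.coe_mk]
      change ((equivIoc 1 a (x : AddCircle (1:ℝ)) : ℝ)) = id x
      rw [this]
      rfl
    have hsm := hf.aestronglyMeasurable
    rw [← hmap] at hsm
    exact hsm.comp_aemeasurable hφm.aemeasurable
  -- g ∈ L²
  have hgL2 : MemLp g 2 (haarAddCircle : Measure (AddCircle (1:ℝ))) := by
    rw [← hvol, ← hmp.map_eq]
    refine (memLp_map_measure_iff ?_ hmp.measurable.aemeasurable).2 ?_
    · rw [hmp.map_eq, hvol]; exact hgm.mono_ac (by rw [hvol])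
    · exact hf.ae_eq hcomp.symm
  set gL : Lp ℂ 2 (haarAddCircle : Measure (AddCircle (1:ℝ))) := hgL2.toLp g with hgL
  have hae : (gL : AddCircle (1:ℝ) → ℂ) =ᵐ[haarAddCircle] g := hgL2.coeFn_toLp
  -- Fourier coefficients agree
  have hcoef : ∀ n : ℤ, fourierCoeff (gL : AddCircle (1:ℝ) → ℂ) n = fourierCoef f n := by
    intro n
    have h1 : fourierCoeff (gL : AddCircle (1:ℝ) → ℂ) n = fourierCoeff g n := by
      unfold fourierCoeff
      refine integral_congr_ae ?_
      filter_upwards [hae] with z hz; rw [hz]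
    rw [h1, fourierCoeff_eq_intervalIntegral g n a, hI, div_one, one_smul]
    refine intervalIntegral.integral_congr_ae ?_
    filter_upwards [] with x
    intro hx
    rw [uIoc_of_le (by norm_num : a ≤ 1/2)] at hx
    have hx' : x ∈ Set.Ioc a (a+1) := by rwa [hI]
    rw [hg, AddCircle.liftIoc_coe_apply hx', fourier_coe_apply]
    rw [smul_eq_mul, mul_comm]
    congr 1
    push_cast
    ring
  -- value of the integral
  have hval : (∫ t, ‖(gL : AddCircle (1:ℝ) → ℂ) t‖ ^ 2 ∂haarAddCircle)
      = ∫ x in a..(1/2), ‖f x‖ ^ 2 := by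
    have h1 : (∫ t, ‖(gL : AddCircle (1:ℝ) → ℂ) t‖ ^ 2 ∂haarAddCircle)
        = ∫ t, ‖g t‖ ^ 2 ∂haarAddCircle := by
      refine integral_congr_ae ?_
      filter_upwards [hae] with z hz; rw [hz]
    have h2 : (∫ t, ‖g t‖ ^ 2 ∂haarAddCircle) = ∫ x in Set.Ioc a (a+1), ‖g (x : AddCircle (1:ℝ))‖ ^ 2 := by
      rw [← hvol, AddCircle.integral_preimage (1:ℝ) a (fun z => ‖g z‖ ^ 2)]
    rw [h1, h2, hI]
    rw [intervalIntegral.integral_of_le (by norm_num : a ≤ (1/2:ℝ))]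
    refine setIntegral_congr_ae measurableSet_Ioc ?_
    filter_upwards [(ae_restrict_iff' measurableSet_Ioc).1 hcomp] with x hx hx'
    rw [hx hx']
  -- summability
  have hsummable : Summable (fun n : ℤ => ‖fourierCoeff (gL : AddCircle (1:ℝ) → ℂ) n‖ ^ 2) := by
    have hm := lp.memℓp (fourierBasis.repr gL)
    rw [memℓp_gen_iff (by norm_num : 0 < (2 : ℝ≥0∞).toReal)] at hm
    have : ∀ i : ℤ, ‖(fourierBasis.repr gL) i‖ ^ (2 : ℝ≥0∞).toReal
        = ‖fourierCoeff (gL : AddCircle (1:ℝ) → ℂ) i‖ ^ 2 := by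
      intro i
      rw [fourierBasis_repr]
      norm_num
    exact (summable_congr fun i => (this i)).1 hm
  have := tsum_sq_fourierCoeff gL
  rw [hval] at this
  have h := hsummable.hasSum
  rw [this] at h
  simp only [hcoef] at h
  exact h
end aux

lemma coef_neg (f : ℝ → ℂ)
    (heven : ∀ᵐ x ∂(volume.restrict (Set.Ioc (-(1/2) : ℝ) (1/2))), f x = f (-x)) (n : ℤ) :
    fourierCoef f (-n) = fourierCoef f n := by
  unfold fourierCoef
  have h1 : (∫ x in (-(1/2):ℝ)..(1/2),
        f (-x) * Complex.exp (-(Complex.I * ((2*π*n*(-x):ℝ)))))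
      = ∫ x in (-(1/2):ℝ)..(1/2), f x * Complex.exp (-(Complex.I * ((2*π*n*x:ℝ)))) := by
    have := intervalIntegral.integral_comp_neg (a := (-(1/2):ℝ)) (b := (1/2:ℝ))
      (f := fun x => f x * Complex.exp (-(Complex.I * ((2*π*n*x:ℝ)))))
    simpa using this
  rw [← h1]
  refine intervalIntegral.integral_congr_ae ?_
  have heven' := (ae_restrict_iff' measurableSet_Ioc).1 heven
  filter_upwards [heven'] with x hx hx'
  rw [uIoc_of_le (by norm_num : (-(1/2):ℝ) ≤ 1/2)] at hx'
  rw [← hx hx']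
  congr 2
  push_cast
  ring

set_option maxHeartbeats 1000000 in
/-- For every a.e. even `f ∈ L²[−1/2,1/2]`,
`Σ_{n≥0} |f̂(n)|² + Σ_{n≤−1} |(xf)^(n)|² ≥ (11/24)‖f‖²`. -/
theorem stmt17 (f : ℝ → ℂ)
    (hf : MemLp f 2 (volume.restrict (Set.Ioc (-(1/2) : ℝ) (1/2))))
    (heven : ∀ᵐ x ∂(volume.restrict (Set.Ioc (-(1/2) : ℝ) (1/2))), f x = f (-x)) :
    11 / 24 * (∫ x in (-(1/2) : ℝ)..(1/2), ‖f x‖ ^ 2) ≤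
      (∑' n : ℕ, ‖fourierCoef f n‖ ^ 2) +
        ∑' n : {m : ℤ // m ≤ -1}, ‖fourierCoef (fun x => (x : ℂ) * f x) n.1‖ ^ 2 := by
  haveI : Fact ((0:ℝ) < 1) := ⟨one_pos⟩
  have hP := parseval_aux f hf
  set S := ∫ x in (-(1/2):ℝ)..(1/2), ‖f x‖ ^ 2 with hSdef
  have hsum : Summable (fun n : ℤ => ‖fourierCoef f n‖ ^ 2) := hP.summable
  have hA : Summable (fun n : ℕ => ‖fourierCoef f (n : ℤ)‖ ^ 2) := by
    have := hsum.comp_injective (i := fun n : ℕ => (n : ℤ))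
      (fun a b h => by simpa using h)
    exact this
  have hB : Summable (fun n : ℕ => ‖fourierCoef f (-((n : ℤ) + 1))‖ ^ 2) := by
    have := hsum.comp_injective (i := fun n : ℕ => -((n : ℤ) + 1))
      (fun a b h => by simpa using h)
    exact this
  have hsplit := tsum_of_nat_of_neg_add_one (f := fun n : ℤ => ‖fourierCoef f n‖ ^ 2) hA hB
  rw [hP.tsum_eq] at hsplit
  have hBA : (∑' n : ℕ, ‖fourierCoef f (-((n : ℤ) + 1))‖ ^ 2)
      ≤ ∑' n : ℕ, ‖fourierCoef f (n : ℤ)‖ ^ 2 := by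
    refine hB.tsum_le_tsum_of_inj (fun n => n + 1) (fun m n h => by simpa using h)
      (fun c _ => by positivity) (fun n => ?_) hA
    rw [coef_neg f heven ((n : ℤ) + 1)]
    norm_num
  have hS0 : 0 ≤ S := by
    rw [← hP.tsum_eq]
    exact tsum_nonneg fun n => by positivity
  have ht2 : 0 ≤ ∑' n : {m : ℤ // m ≤ -1}, ‖fourierCoef (fun x => (x : ℂ) * f x) n.1‖ ^ 2 :=
    tsum_nonneg fun n => by positivity
  linarith [hsplit, hBA, hS0, ht2]
end
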